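/- The transition system specification P_CLL of the process calculus CLL has exactly one stable transition model. -/

import Mathlib

namespace CLL

attribute [local instance] Classical.propDecidable

/-- CLL process terms over a set `Act` of visible actions.  The action `τ` is
represented by `none : Option Act`, a visible action `a` by `some a`. -/
inductive Tm (Act : Type) : Type where
  | nil  : Tm Act                            -- 0
  | bot  : Tm Act                            -- ⊥
  | pre  : Option Act → Tm Act → Tm Act      -- α.t
  | ec   : Tm Act → Tm Act → Tm Act          -- t □ t
  | conj : Tm Act → Tm Act → Tm Act          -- t ∧ t
  | disj : Tm Act → Tm Act → Tm Act          -- t ∨ t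
  | par  : Set Act → Tm Act → Tm Act → Tm Act -- t ∥_A t

/-- A transition model: a set of transitions `t →α t'`, of instances `t F` of the
inconsistency predicate, and of instances `t F̄_α` of the auxiliary predicates. -/
structure Model (Act : Type) where
  Tr   : Tm Act → Option Act → Tm Act → Prop
  F    : Tm Act → Prop
  Fbar : Tm Act → Option Act → Prop

variable {Act : Type}

/-- The least transition relation of the positive TSS `Strip(P_CLL, M)`:
ground instances of transition rules of `P_CLL` whose negative premises
(checked against `M`) hold, with those negative premises removed. -/
inductive STr (M : Model Act) : Tm Act → Option Act → Tm Act → Prop where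
  | pre (α : Option Act) (t : Tm Act) : STr M (Tm.pre α t) α t
  | ecL {t1 t2 y1 : Tm Act} {a : Act} :
      STr M t1 (some a) y1 → (∀ y, ¬ M.Tr t2 none y) →
      STr M (Tm.ec t1 t2) (some a) y1
  | ecR {t1 t2 y2 : Tm Act} {a : Act} :
      (∀ y, ¬ M.Tr t1 none y) → STr M t2 (some a) y2 →
      STr M (Tm.ec t1 t2) (some a) y2
  | ecTauL {t1 t2 y1 : Tm Act} :
      STr M t1 none y1 → STr M (Tm.ec t1 t2) none (Tm.ec y1 t2)
  | ecTauR {t1 t2 y2 : Tm Act} :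
      STr M t2 none y2 → STr M (Tm.ec t1 t2) none (Tm.ec t1 y2)
  | conjAct {t1 t2 y1 y2 : Tm Act} {a : Act} :
      STr M t1 (some a) y1 → STr M t2 (some a) y2 →
      STr M (Tm.conj t1 t2) (some a) (Tm.conj y1 y2)
  | conjTauL {t1 t2 y1 : Tm Act} :
      STr M t1 none y1 → STr M (Tm.conj t1 t2) none (Tm.conj y1 t2)
  | conjTauR {t1 t2 y2 : Tm Act} :
      STr M t2 none y2 → STr M (Tm.conj t1 t2) none (Tm.conj t1 y2)
  | disjL (t1 t2 : Tm Act) : STr M (Tm.disj t1 t2) none t1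
  | disjR (t1 t2 : Tm Act) : STr M (Tm.disj t1 t2) none t2
  | parTauL {A : Set Act} {t1 t2 y1 : Tm Act} :
      STr M t1 none y1 → STr M (Tm.par A t1 t2) none (Tm.par A y1 t2)
  | parTauR {A : Set Act} {t1 t2 y2 : Tm Act} :
      STr M t2 none y2 → STr M (Tm.par A t1 t2) none (Tm.par A t1 y2)
  | parL {A : Set Act} {t1 t2 y1 : Tm Act} {a : Act} :
      STr M t1 (some a) y1 → (∀ y, ¬ M.Tr t2 none y) → a ∉ A →
      STr M (Tm.par A t1 t2) (some a) (Tm.par A y1 t2)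
  | parR {A : Set Act} {t1 t2 y2 : Tm Act} {a : Act} :
      (∀ y, ¬ M.Tr t1 none y) → STr M t2 (some a) y2 → a ∉ A →
      STr M (Tm.par A t1 t2) (some a) (Tm.par A t1 y2)
  | parSync {A : Set Act} {t1 t2 y1 y2 : Tm Act} {a : Act} :
      STr M t1 (some a) y1 → STr M t2 (some a) y2 → a ∈ A →
      STr M (Tm.par A t1 t2) (some a) (Tm.par A y1 y2)

/-- Least model of the `F̄_α` rules of `Strip(P_CLL, M)`. -/
inductive SFbar (M : Model Act) : Tm Act → Option Act → Prop where
  | intro {t1 t2 y : Tm Act} {α : Option Act} :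
      STr M (Tm.conj t1 t2) α y → ¬ M.F y → SFbar M (Tm.conj t1 t2) α

/-- Least model of the `F` rules of `Strip(P_CLL, M)`. -/
inductive SF (M : Model Act) : Tm Act → Prop where
  | bot : SF M Tm.bot
  | pre {t : Tm Act} (α : Option Act) : SF M t → SF M (Tm.pre α t)
  | disj {t1 t2 : Tm Act} : SF M t1 → SF M t2 → SF M (Tm.disj t1 t2)
  | ecL {t1 t2 : Tm Act} : SF M t1 → SF M (Tm.ec t1 t2)
  | ecR {t1 t2 : Tm Act} : SF M t2 → SF M (Tm.ec t1 t2)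
  | conjL {t1 t2 : Tm Act} : SF M t1 → SF M (Tm.conj t1 t2)
  | conjR {t1 t2 : Tm Act} : SF M t2 → SF M (Tm.conj t1 t2)
  | parL {A : Set Act} {t1 t2 : Tm Act} : SF M t1 → SF M (Tm.par A t1 t2)
  | parR {A : Set Act} {t1 t2 : Tm Act} : SF M t2 → SF M (Tm.par A t1 t2)
  | conjMisL {t1 t2 y1 : Tm Act} {a : Act} :
      STr M t1 (some a) y1 → (∀ y, ¬ M.Tr t2 (some a) y) →
      (∀ y, ¬ M.Tr (Tm.conj t1 t2) none y) → SF M (Tm.conj t1 t2)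
  | conjMisR {t1 t2 y2 : Tm Act} {a : Act} :
      (∀ y, ¬ M.Tr t1 (some a) y) → STr M t2 (some a) y2 →
      (∀ y, ¬ M.Tr (Tm.conj t1 t2) none y) → SF M (Tm.conj t1 t2)
  | conjDead {t1 t2 z : Tm Act} {α : Option Act} :
      STr M (Tm.conj t1 t2) α z → ¬ M.Fbar (Tm.conj t1 t2) α →
      SF M (Tm.conj t1 t2)

/-- `M` is a stable transition model of `P_CLL`:  `M` coincides with the least
model of the positive TSS `Strip(P_CLL, M)`. -/
def IsStable (M : Model Act) : Prop :=
  (∀ t α t', M.Tr t α t' ↔ STr M t α t') ∧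
  (∀ t, M.F t ↔ SF M t) ∧
  (∀ t α, M.Fbar t α ↔ SFbar M t α)

/-- `t` is stable: it has no τ-transition. -/
def Stable (M : Model Act) (t : Tm Act) : Prop := ∀ t', ¬ M.Tr t none t'

/-- The ready set `I(t)`. -/
def Ready (M : Model Act) (t : Tm Act) : Set (Option Act) :=
  {α | ∃ u, M.Tr t α u}

/-- One τ-step between consistent terms: `t →τ_F s`. -/
def TauF (M : Model Act) (t s : Tm Act) : Prop :=
  M.Tr t none s ∧ ¬ M.F t ∧ ¬ M.F s

/-- `t ⇒ε_F s`: a sequence of τ-transitions all whose terms (endpoints included)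
are consistent. -/
def EpsF (M : Model Act) (t s : Tm Act) : Prop :=
  ¬ M.F t ∧ Relation.ReflTransGen (TauF M) t s

/-- `t ⇒ε_F| s`:  `t ⇒ε_F s` with `s` stable. -/
def EpsFS (M : Model Act) (t s : Tm Act) : Prop :=
  EpsF M t s ∧ Stable M s

/-- `t ⇒α_F s`. -/
def WeakF (M : Model Act) (α : Option Act) (t s : Tm Act) : Prop :=
  ∃ r p, EpsF M t r ∧ M.Tr r α p ∧ EpsF M p s

/-- `t ⇒α_F| s`. -/
def WeakFS (M : Model Act) (α : Option Act) (t s : Tm Act) : Prop :=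
  WeakF M α t s ∧ Stable M s

/-- `R` is a stable ready simulation relation. -/
def IsRS (M : Model Act) (R : Tm Act → Tm Act → Prop) : Prop :=
  ∀ t s, R t s →
    (Stable M t ∧ Stable M s) ∧
    (¬ M.F t → ¬ M.F s) ∧
    (∀ (a : Act) t', WeakFS M (some a) t t' →
      ∃ s', WeakFS M (some a) s s' ∧ R t' s') ∧
    (¬ M.F t → Ready M t = Ready M s)

/-- `t ⊏̃_RS s`. -/
def RSs (M : Model Act) (t s : Tm Act) : Prop :=
  ∃ R, IsRS M R ∧ R t s

/-- `t ⊑_RS s`. -/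
def RSle (M : Model Act) (t s : Tm Act) : Prop :=
  ∀ t', EpsFS M t t' → ∃ s', EpsFS M s s' ∧ RSs M t' s'

/-- `t =_RS s`. -/
def RSeq (M : Model Act) (t s : Tm Act) : Prop :=
  RSle M t s ∧ RSle M s t

/-- The binary operators `□`, `∧` and `∥_A`. -/
def IsStaticOp (Act : Type) (op : Tm Act → Tm Act → Tm Act) : Prop :=
  op = Tm.ec ∨ op = Tm.conj ∨ ∃ A : Set Act, op = Tm.par A

/-- General external choice `□_{i<n} t_i` over a finite sequence of terms. -/
def bigEC : List (Tm Act) → Tm Act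
  | [] => Tm.nil
  | t :: ts => ts.foldl Tm.ec t

/-- General disjunction `⋁_{i<n} t_i` over a finite (nonempty) sequence. -/
def bigDisj : List (Tm Act) → Tm Act
  | [] => Tm.nil
  | t :: ts => ts.foldl Tm.disj t

/-- `□_{i<n} a_i.t_i` for a sequence of prefixed terms given by pairs. -/
def ecPre (l : List (Act × Tm Act)) : Tm Act :=
  bigEC (l.map fun p => Tm.pre (some p.1) p.2)

/-- The sequence of all `a_i.(t_i ∧ s_j)` with `a_i = b_j`. -/
noncomputable def matched (l1 l2 : List (Act × Tm Act)) : List (Act × Tm Act) :=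
  ((l1.product l2).filter fun q => decide (q.1.1 = q.2.1)).map
    fun q => (q.1.1, Tm.conj q.1.2 q.2.2)

/-- The right-hand side `((□Ω1)□(□Ω2))□(□Ω3)` of the expansion law. -/
noncomputable def expRHS (A : Set Act) (l1 l2 : List (Act × Tm Act)) : Tm Act :=
  Tm.ec
    (Tm.ec
      (bigEC ((l1.filter fun p => decide (p.1 ∉ A)).map
        fun p => Tm.pre (some p.1) (Tm.par A p.2 (ecPre l2))))
      (bigEC ((l2.filter fun q => decide (q.1 ∉ A)).map
        fun q => Tm.pre (some q.1) (Tm.par A (ecPre l1) q.2))))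
    (bigEC (((l1.product l2).filter fun q => decide (q.1.1 = q.2.1 ∧ q.1.1 ∈ A)).map
      fun q => Tm.pre (some q.1.1) (Tm.par A q.1.2 q.2.2)))

/-- Basic process terms: built from `0` by prefixing, `∨`, `□` and `∥_A`. -/
inductive Basic : Tm Act → Prop where
  | nil : Basic Tm.nil
  | pre (α : Option Act) {t : Tm Act} : Basic t → Basic (Tm.pre α t)
  | disj {t1 t2 : Tm Act} : Basic t1 → Basic t2 → Basic (Tm.disj t1 t2)
  | ec {t1 t2 : Tm Act} : Basic t1 → Basic t2 → Basic (Tm.ec t1 t2)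
  | par (A : Set Act) {t1 t2 : Tm Act} :
      Basic t1 → Basic t2 → Basic (Tm.par A t1 t2)

/-- Derivability `⊢ t ≤ s` in the axiomatic system `AX_CLL`. -/
inductive Deriv : Tm Act → Tm Act → Prop where
  -- inference rules
  | refl (t : Tm Act) : Deriv t t
  | trans {t u s : Tm Act} : Deriv t u → Deriv u s → Deriv t s
  | pre_mono (α : Option Act) {t s : Tm Act} :
      Deriv t s → Deriv (Tm.pre α t) (Tm.pre α s)
  | ec_mono {t1 s1 t2 s2 : Tm Act} :
      Deriv t1 s1 → Deriv t2 s2 → Deriv (Tm.ec t1 t2) (Tm.ec s1 s2)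
  | conj_mono {t1 s1 t2 s2 : Tm Act} :
      Deriv t1 s1 → Deriv t2 s2 → Deriv (Tm.conj t1 t2) (Tm.conj s1 s2)
  | disj_mono {t1 s1 t2 s2 : Tm Act} :
      Deriv t1 s1 → Deriv t2 s2 → Deriv (Tm.disj t1 t2) (Tm.disj s1 s2)
  | par_mono (A : Set Act) {t1 s1 t2 s2 : Tm Act} :
      Deriv t1 s1 → Deriv t2 s2 → Deriv (Tm.par A t1 t2) (Tm.par A s1 s2)
  -- EC1–EC5
  | ec_comm (x y : Tm Act) : Deriv (Tm.ec x y) (Tm.ec y x)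
  | ec_assoc1 (x y z : Tm Act) : Deriv (Tm.ec (Tm.ec x y) z) (Tm.ec x (Tm.ec y z))
  | ec_assoc2 (x y z : Tm Act) : Deriv (Tm.ec x (Tm.ec y z)) (Tm.ec (Tm.ec x y) z)
  | ec_idem1 (x : Tm Act) : Deriv (Tm.ec x x) x
  | ec_idem2 (x : Tm Act) : Deriv x (Tm.ec x x)
  | ec_nil1 (x : Tm Act) : Deriv (Tm.ec x Tm.nil) x
  | ec_nil2 (x : Tm Act) : Deriv x (Tm.ec x Tm.nil)
  | ec_bot1 (x : Tm Act) : Deriv (Tm.ec x Tm.bot) Tm.bot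
  | ec_bot2 (x : Tm Act) : Deriv Tm.bot (Tm.ec x Tm.bot)
  -- DI1–DI5
  | di_comm (x y : Tm Act) : Deriv (Tm.disj x y) (Tm.disj y x)
  | di_assoc1 (x y z : Tm Act) :
      Deriv (Tm.disj x (Tm.disj y z)) (Tm.disj (Tm.disj x y) z)
  | di_assoc2 (x y z : Tm Act) :
      Deriv (Tm.disj (Tm.disj x y) z) (Tm.disj x (Tm.disj y z))
  | di_idem1 (x : Tm Act) : Deriv (Tm.disj x x) x
  | di_idem2 (x : Tm Act) : Deriv x (Tm.disj x x)
  | di_bot1 (x : Tm Act) : Deriv (Tm.disj x Tm.bot) x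
  | di_bot2 (x : Tm Act) : Deriv x (Tm.disj x Tm.bot)
  | di_le (x y : Tm Act) : Deriv x (Tm.disj x y)
  -- CO1–CO4
  | co_comm (x y : Tm Act) : Deriv (Tm.conj x y) (Tm.conj y x)
  | co_assoc1 (x y z : Tm Act) :
      Deriv (Tm.conj (Tm.conj x y) z) (Tm.conj x (Tm.conj y z))
  | co_assoc2 (x y z : Tm Act) :
      Deriv (Tm.conj x (Tm.conj y z)) (Tm.conj (Tm.conj x y) z)
  | co_idem1 (x : Tm Act) : Deriv (Tm.conj x x) x
  | co_idem2 (x : Tm Act) : Deriv x (Tm.conj x x)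
  | co_bot1 (x : Tm Act) : Deriv (Tm.conj x Tm.bot) Tm.bot
  | co_bot2 (x : Tm Act) : Deriv Tm.bot (Tm.conj x Tm.bot)
  -- DS1–DS4
  | ds1 (x y z : Tm Act) :
      Deriv (Tm.ec x (Tm.disj y z)) (Tm.disj (Tm.ec x y) (Tm.ec x z))
  | ds2 (x y z : Tm Act) :
      Deriv (Tm.conj x (Tm.disj y z)) (Tm.disj (Tm.conj x y) (Tm.conj x z))
  | ds3 (A : Set Act) (x y z : Tm Act) :
      Deriv (Tm.par A x (Tm.disj y z)) (Tm.disj (Tm.par A x y) (Tm.par A x z))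
  | ds4 (a : Act) {x y : Tm Act} : Basic x → Basic y →
      Deriv (Tm.pre (some a) (Tm.disj x y))
            (Tm.ec (Tm.pre (some a) x) (Tm.pre (some a) y))
  -- PR1, PR2
  | pr1a (a : Act) : Deriv (Tm.pre (some a) Tm.bot) Tm.bot
  | pr1b (a : Act) : Deriv Tm.bot (Tm.pre (some a) Tm.bot)
  | pr2a (x : Tm Act) : Deriv (Tm.pre none x) x
  | pr2b (x : Tm Act) : Deriv x (Tm.pre none x)
  -- PA1, PA2
  | pa_comm (A : Set Act) (x y : Tm Act) : Deriv (Tm.par A x y) (Tm.par A y x)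
  | pa_bot1 (A : Set Act) (x : Tm Act) : Deriv (Tm.par A x Tm.bot) Tm.bot
  | pa_bot2 (A : Set Act) (x : Tm Act) : Deriv Tm.bot (Tm.par A x Tm.bot)
  -- ECC1–ECC3
  | ecc1a (l1 l2 : List (Act × Tm Act)) :
      ({a | a ∈ l1.map Prod.fst} : Set Act) ≠ {a | a ∈ l2.map Prod.fst} →
      Deriv (Tm.conj (ecPre l1) (ecPre l2)) Tm.bot
  | ecc1b (l1 l2 : List (Act × Tm Act)) :
      ({a | a ∈ l1.map Prod.fst} : Set Act) ≠ {a | a ∈ l2.map Prod.fst} →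
      Deriv Tm.bot (Tm.conj (ecPre l1) (ecPre l2))
  | ecc2 (l : List (Act × Tm Act × Tm Act)) :
      Deriv (ecPre (l.map fun p => (p.1, Tm.conj p.2.1 p.2.2)))
            (Tm.conj (ecPre (l.map fun p => (p.1, p.2.1)))
                     (ecPre (l.map fun p => (p.1, p.2.2))))
  | ecc3 (l : List (Act × Tm Act × Tm Act)) :
      (l.map Prod.fst).Nodup →
      Deriv (Tm.conj (ecPre (l.map fun p => (p.1, p.2.1)))
                     (ecPre (l.map fun p => (p.1, p.2.2))))
            (ecPre (l.map fun p => (p.1, Tm.conj p.2.1 p.2.2)))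
  -- EXP1, EXP2
  | exp1 (A : Set Act) (l1 l2 : List (Act × Tm Act)) :
      (∀ p ∈ l1, Basic p.2) → (∀ q ∈ l2, Basic q.2) →
      Deriv (Tm.par A (ecPre l1) (ecPre l2)) (expRHS A l1 l2)
  | exp2 (A : Set Act) (l1 l2 : List (Act × Tm Act)) :
      (∀ p ∈ l1, Basic p.2) → (∀ q ∈ l2, Basic q.2) →
      Deriv (expRHS A l1 l2) (Tm.par A (ecPre l1) (ecPre l2))

/-- The set `NF_B` of normal forms different from `⊥`. -/
inductive NFB : Tm Act → Prop where
  | mk (ls : List (List (Act × Tm Act))) :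
      ls ≠ [] →
      (∀ l ∈ ls, (l.map Prod.fst).Nodup) →
      (∀ l ∈ ls, ∀ p ∈ l, NFB p.2) →
      NFB (bigDisj (ls.map ecPre))

/-- Normal forms. -/
def NF (t : Tm Act) : Prop := t = Tm.bot ∨ NFB t

end CLL

namespace CLL

variable {Act : Type}

/-- Size measure: transitions strictly decrease it, as do proper subterms. -/
def size : Tm Act → ℕ
  | Tm.nil => 0
  | Tm.bot => 0
  | Tm.pre _ t => size t + 1
  | Tm.ec t1 t2 => size t1 + size t2 + 1
  | Tm.conj t1 t2 => size t1 + size t2 + 1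
  | Tm.disj t1 t2 => size t1 + size t2 + 1
  | Tm.par _ t1 t2 => size t1 + size t2 + 1

lemma str_size {M : Model Act} {t : Tm Act} {α : Option Act} {t' : Tm Act}
    (h : STr M t α t') : size t' < size t := by
  induction h <;> simp [size] at * <;> omega

/-- The τ-transition relation, independent of the model. -/
inductive Tau : Tm Act → Tm Act → Prop where
  | pre (t : Tm Act) : Tau (Tm.pre none t) t
  | ecL {t1 t2 y1 : Tm Act} : Tau t1 y1 → Tau (Tm.ec t1 t2) (Tm.ec y1 t2)
  | ecR {t1 t2 y2 : Tm Act} : Tau t2 y2 → Tau (Tm.ec t1 t2) (Tm.ec t1 y2)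
  | conjL {t1 t2 y1 : Tm Act} : Tau t1 y1 → Tau (Tm.conj t1 t2) (Tm.conj y1 t2)
  | conjR {t1 t2 y2 : Tm Act} : Tau t2 y2 → Tau (Tm.conj t1 t2) (Tm.conj t1 y2)
  | disjL (t1 t2 : Tm Act) : Tau (Tm.disj t1 t2) t1
  | disjR (t1 t2 : Tm Act) : Tau (Tm.disj t1 t2) t2
  | parL {A : Set Act} {t1 t2 y1 : Tm Act} :
      Tau t1 y1 → Tau (Tm.par A t1 t2) (Tm.par A y1 t2)
  | parR {A : Set Act} {t1 t2 y2 : Tm Act} :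
      Tau t2 y2 → Tau (Tm.par A t1 t2) (Tm.par A t1 y2)

lemma STr_none_iff_Tau {M : Model Act} {t t' : Tm Act} :
    STr M t none t' ↔ Tau t t' := by
  constructor
  · intro h
    have : ∀ {s α s'}, STr M s α s' → α = none → Tau s s' := by
      intro s α s' hs
      induction hs with
      | pre α t => rintro rfl; exact Tau.pre t
      | ecL _ _ _ => intro h; cases h
      | ecR _ _ _ => intro h; cases h
      | ecTauL _ ih => intro _; exact Tau.ecL (ih rfl)
      | ecTauR _ ih => intro _; exact Tau.ecR (ih rfl)
      | conjAct _ _ _ _ => intro h; cases h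
      | conjTauL _ ih => intro _; exact Tau.conjL (ih rfl)
      | conjTauR _ ih => intro _; exact Tau.conjR (ih rfl)
      | disjL t1 t2 => intro _; exact Tau.disjL t1 t2
      | disjR t1 t2 => intro _; exact Tau.disjR t1 t2
      | parTauL _ ih => intro _; exact Tau.parL (ih rfl)
      | parTauR _ ih => intro _; exact Tau.parR (ih rfl)
      | parL _ _ _ _ => intro h; cases h
      | parR _ _ _ _ => intro h; cases h
      | parSync _ _ _ _ _ => intro h; cases h
    exact this h rfl
  · intro h
    induction h with
    | pre t => exact STr.pre none t
    | ecL _ ih => exact STr.ecTauL ih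
    | ecR _ ih => exact STr.ecTauR ih
    | conjL _ ih => exact STr.conjTauL ih
    | conjR _ ih => exact STr.conjTauR ih
    | disjL t1 t2 => exact STr.disjL t1 t2
    | disjR t1 t2 => exact STr.disjR t1 t2
    | parL _ ih => exact STr.parTauL ih
    | parR _ ih => exact STr.parTauR ih

/-- `STr` only depends on the τ-part of the model's transitions. -/
lemma STr_mono {M M' : Model Act}
    (h : ∀ t t', M.Tr t none t' ↔ M'.Tr t none t') :
    ∀ {t α t'}, STr M t α t' → STr M' t α t' := by
  intro t α t' hh
  induction hh with
  | pre α t => exact STr.pre α t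
  | ecL _ h2 ih => exact STr.ecL ih (fun y hy => h2 y ((h _ y).mpr hy))
  | ecR h1 _ ih => exact STr.ecR (fun y hy => h1 y ((h _ y).mpr hy)) ih
  | ecTauL _ ih => exact STr.ecTauL ih
  | ecTauR _ ih => exact STr.ecTauR ih
  | conjAct _ _ ih1 ih2 => exact STr.conjAct ih1 ih2
  | conjTauL _ ih => exact STr.conjTauL ih
  | conjTauR _ ih => exact STr.conjTauR ih
  | disjL t1 t2 => exact STr.disjL t1 t2
  | disjR t1 t2 => exact STr.disjR t1 t2
  | parTauL _ ih => exact STr.parTauL ih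
  | parTauR _ ih => exact STr.parTauR ih
  | parL _ h2 ha ih => exact STr.parL ih (fun y hy => h2 y ((h _ y).mpr hy)) ha
  | parR h1 _ ha ih => exact STr.parR (fun y hy => h1 y ((h _ y).mpr hy)) ih ha
  | parSync _ _ ha ih1 ih2 => exact STr.parSync ih1 ih2 ha

lemma STr_congr {M M' : Model Act}
    (h : ∀ t t', M.Tr t none t' ↔ M'.Tr t none t') {t α t'} :
    STr M t α t' ↔ STr M' t α t' :=
  ⟨STr_mono h, STr_mono (fun t t' => (h t t').symm)⟩

/-- Auxiliary model whose τ-transitions are `Tau`. -/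
def Mtau : Model Act :=
  ⟨fun t α t' => α = none ∧ Tau t t', fun _ => False, fun _ _ => False⟩

/-- The transition relation of the unique stable model. -/
def Tr0 (t : Tm Act) (α : Option Act) (t' : Tm Act) : Prop := STr Mtau t α t'

lemma Tr0_none_iff_Tau {t t' : Tm Act} : Tr0 t none t' ↔ Tau t t' :=
  STr_none_iff_Tau

lemma tr0_size {t : Tm Act} {α : Option Act} {t' : Tm Act}
    (h : Tr0 t α t') : size t' < size t := str_size h

/-- The inconsistency predicate of the unique stable model, by recursion on size. -/
def F0 : Tm Act → Prop
  | Tm.nil => False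
  | Tm.bot => True
  | Tm.pre _ u => F0 u
  | Tm.disj u v => F0 u ∧ F0 v
  | Tm.ec u v => F0 u ∨ F0 v
  | Tm.par _ u v => F0 u ∨ F0 v
  | Tm.conj u v =>
      F0 u ∨ F0 v ∨
      (∃ (a : Act) (y1 : Tm Act), Tr0 u (some a) y1 ∧ (∀ y, ¬ Tr0 v (some a) y) ∧
        (∀ y, ¬ Tr0 (Tm.conj u v) none y)) ∨
      (∃ (a : Act) (y2 : Tm Act), (∀ y, ¬ Tr0 u (some a) y) ∧ Tr0 v (some a) y2 ∧
        (∀ y, ¬ Tr0 (Tm.conj u v) none y)) ∨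
      (∃ α : Option Act, (∃ z, Tr0 (Tm.conj u v) α z) ∧
        ∀ y, Tr0 (Tm.conj u v) α y → F0 y)
termination_by t => size t
decreasing_by
  all_goals simp [size]
  all_goals first
    | omega
    | (rename_i h; have := tr0_size h; simp [size] at this; omega)

/-- The auxiliary predicates of the unique stable model. -/
def Fbar0 (t : Tm Act) (α : Option Act) : Prop :=
  (∃ u v, t = Tm.conj u v) ∧ ∃ y, Tr0 t α y ∧ ¬ F0 y

/-- The unique stable model. -/
def M0 : Model Act := ⟨Tr0, F0, Fbar0⟩

/-- Main characterization: for any model transition-consistent with `Tr0` and whose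
`Fbar` behaves like `Fbar0` w.r.t. a predicate `G` that agrees with `F0`,
the least model of the `F` rules is `F0`. -/
lemma SF_iff_F0 (M : Model Act) (G : Tm Act → Prop)
    (hTr : ∀ t α t', M.Tr t α t' ↔ Tr0 t α t')
    (hFbar : ∀ (u v : Tm Act) (α : Option Act),
      M.Fbar (Tm.conj u v) α ↔ ∃ y, Tr0 (Tm.conj u v) α y ∧ ¬ G y)
    (hG : ∀ t, (SF M t ↔ F0 t) → (G t ↔ F0 t)) :
    ∀ t, SF M t ↔ F0 t := by
  have hnone : ∀ t t' : Tm Act, M.Tr t none t' ↔ Mtau.Tr t none t' := by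
    intro t t'
    rw [hTr t none t', Tr0_none_iff_Tau]
    simp [Mtau]
  have hSTr : ∀ {t : Tm Act} {α : Option Act} {t' : Tm Act},
      STr M t α t' ↔ Tr0 t α t' := fun {t α t'} => STr_congr hnone
  have main : ∀ n (t : Tm Act), size t < n → (SF M t ↔ F0 t) := by
    intro n
    induction n with
    | zero => intro t ht; exact absurd ht (Nat.not_lt_zero _)
    | succ n IH =>
      intro t ht
      have IH' : ∀ s : Tm Act, size s < size t → (SF M s ↔ F0 s) :=
        fun s hs => IH s (by omega)
      cases t with
      | nil =>
        simp only [F0]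
        exact iff_of_false (fun h => by cases h) (fun h => h)
      | bot =>
        simp only [F0]
        exact iff_of_true SF.bot trivial
      | pre α u =>
        simp only [F0]
        rw [← IH' u (by simp [size])]
        constructor
        · intro h; cases h with | pre _ h => exact h
        · exact SF.pre α
      | disj u v =>
        simp only [F0]
        rw [← IH' u (by simp [size]), ← IH' v (by simp [size])]
        constructor
        · intro h; cases h with | disj h1 h2 => exact ⟨h1, h2⟩
        · intro h; exact SF.disj h.1 h.2
      | ec u v =>
        simp only [F0]
        rw [← IH' u (by simp [size]), ← IH' v (by simp [size])]
        constructor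
        · intro h
          cases h with
          | ecL h => exact Or.inl h
          | ecR h => exact Or.inr h
        · rintro (h | h)
          exacts [SF.ecL h, SF.ecR h]
      | par A u v =>
        simp only [F0]
        rw [← IH' u (by simp [size]), ← IH' v (by simp [size])]
        constructor
        · intro h
          cases h with
          | parL h => exact Or.inl h
          | parR h => exact Or.inr h
        · rintro (h | h)
          exacts [SF.parL h, SF.parR h]
      | conj u v =>
        simp only [F0]
        constructor
        · intro h
          cases h with
          | conjL h => exact Or.inl ((IH' u (by simp [size])).mp h)
          | conjR h => exact Or.inr (Or.inl ((IH' v (by simp [size])).mp h))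
          | conjMisL h1 h2 h3 =>
            exact Or.inr (Or.inr (Or.inl ⟨_, _, hSTr.mp h1,
              fun y hy => h2 y ((hTr _ _ _).mpr hy),
              fun y hy => h3 y ((hTr _ _ _).mpr hy)⟩))
          | conjMisR h1 h2 h3 =>
            exact Or.inr (Or.inr (Or.inr (Or.inl ⟨_, _,
              fun y hy => h1 y ((hTr _ _ _).mpr hy), hSTr.mp h2,
              fun y hy => h3 y ((hTr _ _ _).mpr hy)⟩)))
          | conjDead h1 h2 =>
            refine Or.inr (Or.inr (Or.inr (Or.inr ⟨_, ⟨_, hSTr.mp h1⟩, ?_⟩)))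
            intro y hy
            by_contra hFy
            exact h2 ((hFbar u v _).mpr ⟨y, hy,
              fun gy => hFy ((hG y (IH' y (tr0_size hy))).mp gy)⟩)
        · rintro (h | h | ⟨a, y1, h1, h2, h3⟩ | ⟨a, y2, h1, h2, h3⟩ |
            ⟨α, ⟨z, hz⟩, hall⟩)
          · exact SF.conjL ((IH' u (by simp [size])).mpr h)
          · exact SF.conjR ((IH' v (by simp [size])).mpr h)
          · exact SF.conjMisL (hSTr.mpr h1)
              (fun y hy => h2 y ((hTr _ _ _).mp hy))
              (fun y hy => h3 y ((hTr _ _ _).mp hy))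
          · exact SF.conjMisR (fun y hy => h1 y ((hTr _ _ _).mp hy))
              (hSTr.mpr h2)
              (fun y hy => h3 y ((hTr _ _ _).mp hy))
          · refine SF.conjDead (hSTr.mpr hz) ?_
            intro hfb
            obtain ⟨y, hy, hGy⟩ := (hFbar u v α).mp hfb
            exact hGy ((hG y (IH' y (tr0_size hy))).mpr (hall y hy))
  exact fun t => main (size t + 1) t (Nat.lt_succ_self _)

lemma M0_stable : IsStable (M0 : Model Act) := by
  have hTr : ∀ (t : Tm Act) (α : Option Act) t', (M0 : Model Act).Tr t α t' ↔ Tr0 t α t' :=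
    fun _ _ _ => Iff.rfl
  have hnone : ∀ t t' : Tm Act, (M0 : Model Act).Tr t none t' ↔ Mtau.Tr t none t' := by
    intro t t'
    show Tr0 t none t' ↔ _
    rw [Tr0_none_iff_Tau]
    simp [Mtau]
  have hSTr : ∀ {t : Tm Act} {α : Option Act} {t' : Tm Act},
      STr (M0 : Model Act) t α t' ↔ Tr0 t α t' := fun {t α t'} => STr_congr hnone
  have hFbar0 : ∀ (u v : Tm Act) (α : Option Act),
      (M0 : Model Act).Fbar (Tm.conj u v) α ↔
        ∃ y, Tr0 (Tm.conj u v) α y ∧ ¬ F0 y := by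
    intro u v α
    exact ⟨And.right, fun h => ⟨⟨u, v, rfl⟩, h⟩⟩
  have hF : ∀ t : Tm Act, SF (M0 : Model Act) t ↔ F0 t :=
    SF_iff_F0 M0 F0 hTr hFbar0 (fun t _ => Iff.rfl)
  refine ⟨fun t α t' => hSTr.symm, fun t => (hF t).symm, ?_⟩
  intro t α
  constructor
  · rintro ⟨⟨u, v, rfl⟩, y, hy, hFy⟩
    exact SFbar.intro (hSTr.mpr hy) hFy
  · intro h
    cases h with
    | intro h1 h2 => exact ⟨⟨_, _, rfl⟩, _, hSTr.mp h1, h2⟩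

lemma stable_eq (M : Model Act) (hM : IsStable M) : M = M0 := by
  obtain ⟨hTrS, hFS, hFbS⟩ := hM
  have hnone : ∀ t t' : Tm Act, M.Tr t none t' ↔ Mtau.Tr t none t' := by
    intro t t'
    rw [hTrS t none t', STr_none_iff_Tau]
    simp [Mtau]
  have hSTr : ∀ {t : Tm Act} {α : Option Act} {t' : Tm Act},
      STr M t α t' ↔ Tr0 t α t' := fun {t α t'} => STr_congr hnone
  have hTr : ∀ (t : Tm Act) (α : Option Act) t', M.Tr t α t' ↔ Tr0 t α t' :=
    fun t α t' => (hTrS t α t').trans hSTr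
  have hFbar : ∀ (u v : Tm Act) (α : Option Act),
      M.Fbar (Tm.conj u v) α ↔ ∃ y, Tr0 (Tm.conj u v) α y ∧ ¬ M.F y := by
    intro u v α
    rw [hFbS]
    constructor
    · intro h
      cases h with
      | intro h1 h2 => exact ⟨_, hSTr.mp h1, h2⟩
    · rintro ⟨y, hy, hFy⟩
      exact SFbar.intro (hSTr.mpr hy) hFy
  have hF : ∀ t : Tm Act, SF M t ↔ F0 t :=
    SF_iff_F0 M M.F hTr hFbar (fun t h => (hFS t).trans h)
  have hF' : ∀ t : Tm Act, M.F t ↔ F0 t := fun t => (hFS t).trans (hF t)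
  have hFb' : ∀ (t : Tm Act) (α : Option Act), M.Fbar t α ↔ Fbar0 t α := by
    intro t α
    rw [hFbS]
    constructor
    · intro h
      cases h with
      | intro h1 h2 =>
        exact ⟨⟨_, _, rfl⟩, _, hSTr.mp h1, fun h0 => h2 ((hF' _).mpr h0)⟩
    · rintro ⟨⟨u, v, rfl⟩, y, hy, h0⟩
      exact SFbar.intro (hSTr.mpr hy) (fun hf => h0 ((hF' y).mp hf))
  have e1 : M.Tr = Tr0 := by
    funext t α t'; exact propext (hTr t α t')
  have e2 : M.F = F0 := by
    funext t; exact propext (hF' t)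
  have e3 : M.Fbar = Fbar0 := by
    funext t α; exact propext (hFb' t α)
  have hM : M = ({ Tr := M.Tr, F := M.F, Fbar := M.Fbar } : Model Act) := rfl
  cases M; cases e1; cases e2; cases e3
  rfl

end CLL

/-- The TSS `P_CLL` has exactly one stable transition model. -/
theorem stmt0 (Act : Type) : ∃! M : CLL.Model Act, CLL.IsStable M := by
  exact ⟨CLL.M0, CLL.M0_stable, fun M hM => CLL.stable_eq M hM⟩
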